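/- Let K and L be positive semidefinite real d×d matrices with K positive definite. If for every antisymmetric d×d matrix H one has trace((K+L)⁻¹(HL − LH)) = 0, then K and L commute. -/
import Mathlib

open Matrix

lemma trace_transpose_mul_self_eq_zero {d : ℕ} {H : Matrix (Fin d) (Fin d) ℝ}
    (h : Matrix.trace (H.transpose * H) = 0) : H = 0 := by
  have : ∑ j : Fin d, ∑ i : Fin d, H i j ^ 2 = 0 := by
    simpa [Matrix.trace, Matrix.diag, Matrix.mul_apply, sq] using h
  ext i j
  have h1 := (Finset.sum_eq_zero_iff_of_nonneg (fun j _ =>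
    Finset.sum_nonneg fun i _ => sq_nonneg (H i j))).1 this j (Finset.mem_univ j)
  have h2 := (Finset.sum_eq_zero_iff_of_nonneg (fun i _ => sq_nonneg (H i j))).1 h1 i
    (Finset.mem_univ i)
  simpa using pow_eq_zero_iff (n := 2) (by norm_num) |>.1 h2

theorem stmt_6 (d : ℕ) (K L : Matrix (Fin d) (Fin d) ℝ)
    (hK : K.PosDef) (hL : L.PosSemidef)
    (hstat : ∀ H : Matrix (Fin d) (Fin d) ℝ, H.transpose = -H →
      Matrix.trace ((K + L)⁻¹ * (H * L - L * H)) = 0) :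
    K * L = L * K := by
  have hKL : (K + L).PosDef := hK.add_posSemidef hL
  have hinv : Invertible (K + L) := hKL.isUnit.invertible
  set M := (K + L)⁻¹ with hM
  have hLsymm : L.transpose = L := by
    have := hL.1; rwa [Matrix.IsHermitian, Matrix.conjTranspose_eq_transpose_of_trivial] at this
  have hKLsymm : (K + L).transpose = K + L := by
    have := hKL.1; rwa [Matrix.IsHermitian, Matrix.conjTranspose_eq_transpose_of_trivial] at this
  have hMsymm : M.transpose = M := by
    rw [hM, Matrix.transpose_nonsing_inv, hKLsymm]
  set H := L * M - M * L with hH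
  have hHanti : H.transpose = -H := by
    rw [hH, Matrix.transpose_sub, Matrix.transpose_mul, Matrix.transpose_mul, hLsymm, hMsymm]
    exact (neg_sub _ _).symm
  have key := hstat H hHanti
  -- trace (M * (H * L - L * H)) = trace (H * H)
  have t1 : Matrix.trace (M * (H * L)) = Matrix.trace (H * (L * M)) := by
    rw [Matrix.trace_mul_comm, Matrix.mul_assoc]
  have t2 : Matrix.trace (M * (L * H)) = Matrix.trace (H * (M * L)) := by
    rw [← Matrix.mul_assoc, Matrix.trace_mul_comm]
  have htr : Matrix.trace (M * (H * L - L * H)) = Matrix.trace (H * H) := by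
    rw [Matrix.mul_sub, Matrix.trace_sub, t1, t2, ← Matrix.trace_sub, ← Matrix.mul_sub, ← hH]
  have hHH : Matrix.trace (H * H) = 0 := by rw [← htr]; exact key
  have hH0 : H = 0 := by
    apply trace_transpose_mul_self_eq_zero
    rw [hHanti, Matrix.neg_mul, Matrix.trace_neg, hHH, neg_zero]
  have hcomm : L * M = M * L := by
    have := sub_eq_zero.mp (hH ▸ hH0)
    exact this
  -- L * (K+L)⁻¹ = (K+L)⁻¹ * L ⟹ (K+L) * L = L * (K+L)
  have hcomm2 : (K + L) * L = L * (K + L) := by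
    have h1 : (K + L) * (L * M) * (K + L) = (K + L) * (M * L) * (K + L) := by rw [hcomm]
    have hMl : (K + L) * M = 1 := Matrix.mul_nonsing_inv _ (isUnit_iff_ne_zero.mpr hKL.det_pos.ne')
    have hMr : M * (K + L) = 1 := Matrix.nonsing_inv_mul _ (isUnit_iff_ne_zero.mpr hKL.det_pos.ne')
    calc (K + L) * L = (K + L) * L * (M * (K + L)) := by rw [hMr, Matrix.mul_one]
      _ = (K + L) * (L * M) * (K + L) := by rw [Matrix.mul_assoc, Matrix.mul_assoc, Matrix.mul_assoc]
      _ = (K + L) * (M * L) * (K + L) := h1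
      _ = ((K + L) * M) * (L * (K + L)) := by rw [Matrix.mul_assoc, Matrix.mul_assoc, Matrix.mul_assoc]
      _ = L * (K + L) := by rw [hMl, Matrix.one_mul]
  have := hcomm2
  rw [Matrix.add_mul, Matrix.mul_add] at this
  have : K * L = L * K := by
    have h := this
    linear_combination (norm := abel) h
  exact this
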